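/- If μ and λ are integers (with the relevant denominators nonzero) satisfying both 1/|6μ-λ| + 1/|6μ+λ| < 1 failing and 1/|9μ+λ| + 1/|2λ| + 1/|9μ-λ| < 1 failing, i.e. both inequalities hold with ≥ 1, and gcd(μ,λ)=1, then μ = 0. -/
import Mathlib

lemma aux2 (a b : ℤ) (ha : 1 ≤ a) (hb : 1 ≤ b)
    (h : (1 : ℚ) / (a : ℤ) + 1 / (b : ℤ) ≥ 1) : a ≤ 2 ∨ b ≤ 2 := by
  by_contra hc
  push_neg at hc
  obtain ⟨ha3, hb3⟩ := hc
  have ha3' : (3 : ℚ) ≤ (a : ℚ) := by exact_mod_cast ha3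
  have hb3' : (3 : ℚ) ≤ (b : ℚ) := by exact_mod_cast hb3
  have h1 : (1 : ℚ) / (a : ℚ) ≤ 1 / 3 := one_div_le_one_div_of_le (by norm_num) ha3'
  have h2 : (1 : ℚ) / (b : ℚ) ≤ 1 / 3 := one_div_le_one_div_of_le (by norm_num) hb3'
  push_cast at h
  linarith

lemma aux3 (a b c : ℤ) (ha : 1 ≤ a) (hb : 1 ≤ b) (hc : 2 ≤ c)
    (h : (1 : ℚ) / (a : ℤ) + 1 / (c : ℤ) + 1 / (b : ℤ) ≥ 1) : a ≤ 4 ∨ b ≤ 4 := by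
  by_contra hco
  push_neg at hco
  obtain ⟨ha5, hb5⟩ := hco
  have ha5' : (5 : ℚ) ≤ (a : ℚ) := by exact_mod_cast ha5
  have hb5' : (5 : ℚ) ≤ (b : ℚ) := by exact_mod_cast hb5
  have hc2' : (2 : ℚ) ≤ (c : ℚ) := by exact_mod_cast hc
  have h1 : (1 : ℚ) / (a : ℚ) ≤ 1 / 5 := one_div_le_one_div_of_le (by norm_num) ha5'
  have h2 : (1 : ℚ) / (b : ℚ) ≤ 1 / 5 := one_div_le_one_div_of_le (by norm_num) hb5'
  have h3 : (1 : ℚ) / (c : ℚ) ≤ 1 / 2 := one_div_le_one_div_of_le (by norm_num) hc2'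
  push_cast at h
  linarith

theorem stmt_7 (μ l : ℤ) (hcop : Int.gcd μ l = 1) (hl : l ≠ 0)
    (h1 : 6 * μ - l ≠ 0) (h2 : 6 * μ + l ≠ 0) (h3 : 9 * μ - l ≠ 0) (h4 : 9 * μ + l ≠ 0)
    (hA : (1 : ℚ) / (|6 * μ - l| : ℤ) + 1 / (|6 * μ + l| : ℤ) ≥ 1)
    (hB : (1 : ℚ) / (|9 * μ + l| : ℤ) + 1 / (|2 * l| : ℤ) + 1 / (|9 * μ - l| : ℤ) ≥ 1) :
    μ = 0 := by
  have ha1 : (1:ℤ) ≤ |6 * μ - l| := Int.one_le_abs (by omega)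
  have ha2 : (1:ℤ) ≤ |6 * μ + l| := Int.one_le_abs (by omega)
  have ha3 : (1:ℤ) ≤ |9 * μ - l| := Int.one_le_abs (by omega)
  have ha4 : (1:ℤ) ≤ |9 * μ + l| := Int.one_le_abs (by omega)
  have ha5 : (2:ℤ) ≤ |2 * l| := by
    have : (1:ℤ) ≤ |l| := Int.one_le_abs hl
    rw [abs_mul]; simp; omega
  have hd1 := aux2 _ _ ha1 ha2 hA
  have hd2 := aux3 _ _ _ ha4 ha3 ha5 hB
  rcases hd1 with h | h <;> rcases hd2 with h' | h' <;>
    obtain ⟨e1, e2⟩ := abs_le.mp h <;> obtain ⟨e3, e4⟩ := abs_le.mp h'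
  · -- |6μ-l| ≤ 2, |9μ+l| ≤ 4
    omega
  · -- |6μ-l| ≤ 2, |9μ-l| ≤ 4
    have hm1 : -2 ≤ μ := by omega
    have hm2 : μ ≤ 2 := by omega
    have hl1 : 6 * μ - 2 ≤ l := by omega
    have hl2 : l ≤ 6 * μ + 2 := by omega
    interval_cases μ <;> [skip; skip; rfl; skip; skip] <;>
    · norm_num at hl1 hl2
      interval_cases l <;>
        first
          | (exfalso; revert hcop; decide)
          | (exfalso; norm_num at hA; done)
          | (exfalso; norm_num at hB; done)
  · -- |6μ+l| ≤ 2, |9μ+l| ≤ 4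
    have hm1 : -2 ≤ μ := by omega
    have hm2 : μ ≤ 2 := by omega
    have hl1 : -6 * μ - 2 ≤ l := by omega
    have hl2 : l ≤ -6 * μ + 2 := by omega
    interval_cases μ <;> [skip; skip; rfl; skip; skip] <;>
    · norm_num at hl1 hl2
      interval_cases l <;>
        first
          | (exfalso; revert hcop; decide)
          | (exfalso; norm_num at hA; done)
          | (exfalso; norm_num at hB; done)
  · -- |6μ+l| ≤ 2, |9μ-l| ≤ 4
    omega
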